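/- Let p be a prime, let G be a group, let M be a normal abelian subgroup of G such that [m, g] ∈ Z(G) for every m ∈ M and g ∈ G, and let δ : G → M be a derivation with respect to the conjugation action. Then for every g ∈ G, δ(g^p) = δ(g)^p · [δ(g), g]^(p(p−1)/2), where [a, b] = a⁻¹b⁻¹ab. -/

import Mathlib

/-- If `M` is a normal abelian subgroup of `G` with `[m, g] ∈ Z(G)` for all `m ∈ M`, `g ∈ G`,
and `δ : G → M` is a derivation for the conjugation action, then
`δ (g ^ p) = δ g ^ p * [δ g, g] ^ (p * (p - 1) / 2)`, where `[a, b] = a⁻¹ * b⁻¹ * a * b`. -/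
theorem derivation_pow_p_formula
    {p : ℕ} (hp : p.Prime) {G : Type*} [Group G] (M : Subgroup G) (hM : M.Normal)
    (hab : ∀ a b : G, a ∈ M → b ∈ M → a * b = b * a)
    (hz : ∀ m : G, m ∈ M → ∀ g : G, m⁻¹ * g⁻¹ * m * g ∈ Subgroup.center G)
    (δ : G → M)
    (hδ : ∀ g h : G, (δ (g * h) : G) = h⁻¹ * (δ g : G) * h * (δ h : G)) :
    ∀ g : G,
      (δ (g ^ p) : G) =
        (δ g : G) ^ p * ((δ g : G)⁻¹ * g⁻¹ * (δ g : G) * g) ^ (p * (p - 1) / 2) := by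
  intro g
  set d : G := (δ g : G) with hd
  set c : G := d⁻¹ * g⁻¹ * d * g with hcdef
  have hcz : c ∈ Subgroup.center G := hz d (δ g).2 g
  have hcomm : ∀ x : G, c * x = x * c := fun x =>
    (Subgroup.mem_center_iff.mp hcz x).symm
  have hone : (δ 1 : G) = 1 := by
    have h := hδ 1 1
    simp only [mul_one, one_mul, inv_one] at h
    exact (left_eq_mul.mp h)
  have hconj : ∀ n : ℕ, (g ^ n)⁻¹ * d * g ^ n = d * c ^ n := by
    intro n
    induction n with
    | zero => simp
    | succ n ih =>
      have h1 : g⁻¹ * d * g = d * c := by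
        rw [hcdef]; group
      calc (g ^ (n + 1))⁻¹ * d * g ^ (n + 1)
          = g⁻¹ * ((g ^ n)⁻¹ * d * g ^ n) * g := by
            rw [pow_succ]; group
        _ = g⁻¹ * (d * c ^ n) * g := by rw [ih]
        _ = (g⁻¹ * d * g) * c ^ n := by
            have : ∀ x : G, c ^ n * x = x * c ^ n := fun x =>
              (Subgroup.mem_center_iff.mp (Subgroup.pow_mem _ hcz n) x).symm
            rw [mul_assoc (g⁻¹ * d), ← this g]; group
        _ = d * c ^ (n + 1) := by rw [h1, pow_succ]; rw [mul_assoc, hcomm (c ^ n)]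
  have key : ∀ n : ℕ, (δ (g ^ n) : G) = d ^ n * c ^ (n * (n - 1) / 2) := by
    intro n
    induction n with
    | zero => simp [hone]
    | succ n ih =>
      have harith : (n + 1) * ((n + 1) - 1) / 2 = n + n * (n - 1) / 2 := by
        rcases n with _ | m
        · simp
        · obtain ⟨k, hk⟩ := Nat.even_mul_succ_self m
          have h1 : (m + 1) * m = 2 * k := by rw [Nat.mul_comm]; omega
          simp only [Nat.add_sub_cancel]
          have h2 : (m + 1 + 1) * (m + 1) = 2 * (m + 1) + 2 * k := by
            rw [← h1]; ring
          rw [h2, h1]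
          omega
      have hstep : (δ (g ^ (n + 1)) : G) = (g ^ n)⁻¹ * d * g ^ n * (δ (g ^ n) : G) := by
        rw [pow_succ']
        rw [hδ g (g ^ n)]
      rw [hstep, hconj, ih, harith]
      have hcn : ∀ k : ℕ, ∀ x : G, c ^ k * x = x * c ^ k := fun k x =>
        (Subgroup.mem_center_iff.mp (Subgroup.pow_mem _ hcz k) x).symm
      rw [pow_succ']
      rw [mul_assoc d (c ^ n), ← mul_assoc (c ^ n), hcn n (d ^ n), pow_add]
      group
  exact key p
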